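/- Let A be a finite connected subset of Z^2, gamma > 0, chi_1 a deterministic field on A and chi_2 a random field on A. Then the conditional expectation satisfies E[ R_{A,chi_1+chi_2}(u,v) ] <= R_{A,chi_1}(u,v) * max over nearest-neighbor pairs (u',v') in A of E[ exp(-gamma(chi_{2,u'} + chi_{2,v'})) ], assuming the expectations on the right are finite. -/
import Mathlib


open Finset MeasureTheory
open scoped ProbabilityTheory

/-- Nearest-neighbor adjacency on `ℤ²`. -/
def nbr (u v : ℤ × ℤ) : Prop := |u.1 - v.1| + |u.2 - v.2| = 1

instance : DecidableRel nbr := fun u v => by unfold nbr; infer_instance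

/-- Energy of a flow on the vertex set `A` (each unoriented edge counted once). -/
noncomputable def flowEnergy (A : Finset (ℤ × ℤ)) (r : ℤ × ℤ → ℤ × ℤ → ℝ)
    (θ : ℤ × ℤ → ℤ × ℤ → ℝ) : ℝ :=
  (1 / 2) * ∑ x ∈ A, ∑ y ∈ A, r x y * (θ x y) ^ 2

/-- `θ` is a unit flow from `u` to `v` in the nearest-neighbor network on `A ⊆ ℤ²`. -/
def IsUnitFlow (A : Finset (ℤ × ℤ)) (u v : ℤ × ℤ) (θ : ℤ × ℤ → ℤ × ℤ → ℝ) : Prop :=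
  (∀ x y, θ x y = -θ y x) ∧
  (∀ x y, ¬ (x ∈ A ∧ y ∈ A ∧ nbr x y) → θ x y = 0) ∧
  (∀ x ∈ A, x ≠ u → x ≠ v → ∑ y ∈ A, θ x y = 0) ∧
  (∑ y ∈ A, θ u y = 1)

/-- The effective resistance between `u, v` in the network `A_χ` where the edge `(x, y)` has
resistance `exp (-γ (χ x + χ y))`. -/
noncomputable def effResField (γ : ℝ) (A : Finset (ℤ × ℤ)) (χ : ℤ × ℤ → ℝ)
    (u v : ℤ × ℤ) : ℝ :=
  sInf { E : ℝ | ∃ θ : ℤ × ℤ → ℤ × ℤ → ℝ, IsUnitFlow A u v θ ∧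
    E = flowEnergy A (fun x y => Real.exp (-(γ * (χ x + χ y)))) θ }

lemma flowEnergy_exp_nonneg (A : Finset (ℤ × ℤ)) (γ : ℝ) (χ : ℤ × ℤ → ℝ)
    (θ : ℤ × ℤ → ℤ × ℤ → ℝ) :
    0 ≤ flowEnergy A (fun x y => Real.exp (-(γ * (χ x + χ y)))) θ := by
  unfold flowEnergy
  have : ∀ x ∈ A, (0:ℝ) ≤ ∑ y ∈ A, Real.exp (-(γ * (χ x + χ y))) * (θ x y) ^ 2 := by
    intro x _
    exact Finset.sum_nonneg fun y _ => mul_nonneg (Real.exp_pos _).le (sq_nonneg _)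
  have h := Finset.sum_nonneg this
  positivity

lemma effResField_bddBelow (γ : ℝ) (A : Finset (ℤ × ℤ)) (χ : ℤ × ℤ → ℝ) (u v : ℤ × ℤ) :
    BddBelow { E : ℝ | ∃ θ : ℤ × ℤ → ℤ × ℤ → ℝ, IsUnitFlow A u v θ ∧
      E = flowEnergy A (fun x y => Real.exp (-(γ * (χ x + χ y)))) θ } := by
  refine ⟨0, ?_⟩
  rintro E ⟨θ, _, rfl⟩
  exact flowEnergy_exp_nonneg A γ χ θ

lemma effResField_nonneg (γ : ℝ) (A : Finset (ℤ × ℤ)) (χ : ℤ × ℤ → ℝ) (u v : ℤ × ℤ) :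
    0 ≤ effResField γ A χ u v := by
  apply Real.sInf_nonneg
  rintro E ⟨θ, _, rfl⟩
  exact flowEnergy_exp_nonneg A γ χ θ

/-- Lemma 4.2(b): for a deterministic field `χ₁` and a random field `χ₂` on a finite connected
`A ⊆ ℤ²`,
`E[R_{A, χ₁+χ₂}(u,v)] ≤ R_{A, χ₁}(u,v) * max_{(u',v') n.n. in A} E[exp (-γ (χ₂ u' + χ₂ v'))]`,
the expectations on the right being finite (integrable). -/
theorem integral_effRes_field_le {Ω : Type} [MeasureSpace Ω]
    [IsProbabilityMeasure (ℙ : Measure Ω)]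
    (γ : ℝ) (hγ : 0 < γ)
    (A : Finset (ℤ × ℤ)) (χ₁ : ℤ × ℤ → ℝ) (χ₂ : Ω → ℤ × ℤ → ℝ)
    (hconn : ∀ x ∈ A, ∀ y ∈ A, ∃ p : List (ℤ × ℤ),
      p ≠ [] ∧ p.head? = some x ∧ p.getLast? = some y ∧
      p.Chain' nbr ∧ ∀ z ∈ p, z ∈ A)
    (u v : ℤ × ℤ) (hu : u ∈ A) (hv : v ∈ A)
    (Ed : Finset ((ℤ × ℤ) × (ℤ × ℤ)))
    (hEd : Ed = (A ×ˢ A).filter fun e => nbr e.1 e.2)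
    (hne : Ed.Nonempty)
    (hint : ∀ e ∈ Ed,
      Integrable (fun ω => Real.exp (-(γ * (χ₂ ω e.1 + χ₂ ω e.2)))) ℙ) :
    ∫ ω, effResField γ A (χ₁ + χ₂ ω) u v ∂ℙ ≤
      effResField γ A χ₁ u v *
        Ed.sup' hne (fun e => ∫ ω, Real.exp (-(γ * (χ₂ ω e.1 + χ₂ ω e.2))) ∂ℙ) := by
  classical
  set M := Ed.sup' hne (fun e => ∫ ω, Real.exp (-(γ * (χ₂ ω e.1 + χ₂ ω e.2))) ∂ℙ) with hM
  have hM0 : 0 ≤ M := by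
    obtain ⟨e, he⟩ := id hne
    have h1 : (0:ℝ) ≤ ∫ ω, Real.exp (-(γ * (χ₂ ω e.1 + χ₂ ω e.2))) ∂ℙ :=
      integral_nonneg fun ω => (Real.exp_pos _).le
    have h2 := Finset.le_sup' (fun e => ∫ ω, Real.exp (-(γ * (χ₂ ω e.1 + χ₂ ω e.2))) ∂ℙ) he
    exact le_trans h1 h2
  by_cases hθex : ∃ θ, IsUnitFlow A u v θ
  · set S₁ : Set ℝ := { E : ℝ | ∃ θ : ℤ × ℤ → ℤ × ℤ → ℝ, IsUnitFlow A u v θ ∧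
      E = flowEnergy A (fun x y => Real.exp (-(γ * (χ₁ x + χ₁ y)))) θ } with hS₁
    have hR₁ : effResField γ A χ₁ u v = sInf S₁ := rfl
    obtain ⟨θ₀, hθ₀⟩ := hθex
    have hS₁ne : S₁.Nonempty := ⟨_, θ₀, hθ₀, rfl⟩
    have key : ∀ E ∈ S₁, ∫ ω, effResField γ A (χ₁ + χ₂ ω) u v ∂ℙ ≤ E * M := by
      rintro E ⟨θ, hθ, rfl⟩
      set c : ℤ × ℤ → ℤ × ℤ → ℝ :=
        fun x y => Real.exp (-(γ * (χ₁ x + χ₁ y))) * θ x y ^ 2 with hc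
      have hc0 : ∀ x y, 0 ≤ c x y := fun x y =>
        mul_nonneg (Real.exp_pos _).le (sq_nonneg _)
      set g : Ω → ℝ := fun ω =>
        (1/2) * ∑ x ∈ A, ∑ y ∈ A, c x y * Real.exp (-(γ * (χ₂ ω x + χ₂ ω y))) with hg
      have hterm_int : ∀ x ∈ A, ∀ y ∈ A,
          Integrable (fun ω => c x y * Real.exp (-(γ * (χ₂ ω x + χ₂ ω y)))) ℙ := by
        intro x hx y hy
        by_cases hn : nbr x y
        · exact (hint (x, y) (by rw [hEd]; simp [Finset.mem_filter, hx, hy, hn])).const_mul _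
        · have hz : θ x y = 0 := hθ.2.1 x y (by tauto)
          have hcz : c x y = 0 := by simp [hc, hz]
          simp only [hcz, zero_mul]
          exact integrable_zero Ω ℝ ℙ
      have hsum_int : Integrable (fun ω =>
          ∑ x ∈ A, ∑ y ∈ A, c x y * Real.exp (-(γ * (χ₂ ω x + χ₂ ω y)))) ℙ :=
        integrable_finset_sum A fun x hx =>
          integrable_finset_sum A fun y hy => hterm_int x hx y hy
      have hg_int : Integrable g ℙ := hsum_int.const_mul _
      have hpt : ∀ ω, effResField γ A (χ₁ + χ₂ ω) u v ≤ g ω := by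
        intro ω
        have hmem : flowEnergy A
            (fun x y => Real.exp (-(γ * ((χ₁ + χ₂ ω) x + (χ₁ + χ₂ ω) y)))) θ ∈
            { E : ℝ | ∃ θ' : ℤ × ℤ → ℤ × ℤ → ℝ, IsUnitFlow A u v θ' ∧
              E = flowEnergy A
                (fun x y => Real.exp (-(γ * ((χ₁ + χ₂ ω) x + (χ₁ + χ₂ ω) y)))) θ' } :=
          ⟨θ, hθ, rfl⟩
        have h1 := csInf_le (effResField_bddBelow γ A (χ₁ + χ₂ ω) u v) hmem
        refine le_trans h1 (le_of_eq ?_)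
        unfold flowEnergy
        rw [hg]
        congr 1
        refine Finset.sum_congr rfl fun x _ => Finset.sum_congr rfl fun y _ => ?_
        simp only [Pi.add_apply, hc]
        rw [show -(γ * ((χ₁ x + χ₂ ω x) + (χ₁ y + χ₂ ω y)))
            = -(γ * (χ₁ x + χ₁ y)) + -(γ * (χ₂ ω x + χ₂ ω y)) by ring, Real.exp_add]
        ring
      have hInt : ∫ ω, effResField γ A (χ₁ + χ₂ ω) u v ∂ℙ ≤ ∫ ω, g ω ∂ℙ :=
        integral_mono_of_nonneg
          (ae_of_all _ fun ω => effResField_nonneg γ A (χ₁ + χ₂ ω) u v)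
          hg_int (ae_of_all _ hpt)
      have hg_eval : ∫ ω, g ω ∂ℙ
          = (1/2) * ∑ x ∈ A, ∑ y ∈ A,
              c x y * ∫ ω, Real.exp (-(γ * (χ₂ ω x + χ₂ ω y))) ∂ℙ := by
        rw [hg]
        rw [integral_const_mul]
        congr 1
        rw [integral_finset_sum A (fun x hx =>
          integrable_finset_sum A fun y hy => hterm_int x hx y hy)]
        refine Finset.sum_congr rfl fun x hx => ?_
        rw [integral_finset_sum A (fun y hy => hterm_int x hx y hy)]
        exact Finset.sum_congr rfl fun y _ => integral_const_mul _ _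
      have hbound : (1/2) * ∑ x ∈ A, ∑ y ∈ A,
            c x y * ∫ ω, Real.exp (-(γ * (χ₂ ω x + χ₂ ω y))) ∂ℙ
          ≤ flowEnergy A (fun x y => Real.exp (-(γ * (χ₁ x + χ₁ y)))) θ * M := by
        have hle : ∀ x ∈ A, ∀ y ∈ A,
            c x y * ∫ ω, Real.exp (-(γ * (χ₂ ω x + χ₂ ω y))) ∂ℙ ≤ c x y * M := by
          intro x hx y hy
          by_cases hn : nbr x y
          · have hmemEd : ((x, y) : (ℤ × ℤ) × (ℤ × ℤ)) ∈ Ed := by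
              rw [hEd]; simp [Finset.mem_filter, hx, hy, hn]
            have h2 := Finset.le_sup'
              (fun e => ∫ ω, Real.exp (-(γ * (χ₂ ω e.1 + χ₂ ω e.2))) ∂ℙ) hmemEd
            exact mul_le_mul_of_nonneg_left h2 (hc0 x y)
          · have hz : θ x y = 0 := hθ.2.1 x y (by tauto)
            simp [hc, hz]
        have h2 : (1/2 : ℝ) * ∑ x ∈ A, ∑ y ∈ A,
              c x y * ∫ ω, Real.exp (-(γ * (χ₂ ω x + χ₂ ω y))) ∂ℙ
            ≤ (1/2) * ∑ x ∈ A, ∑ y ∈ A, c x y * M := by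
          have := Finset.sum_le_sum fun x hx =>
            Finset.sum_le_sum fun y hy => hle x hx y hy
          linarith
        refine h2.trans (le_of_eq ?_)
        unfold flowEnergy
        rw [mul_assoc, Finset.sum_mul]
        congr 1
        refine Finset.sum_congr rfl fun x _ => ?_
        rw [Finset.sum_mul]
      calc ∫ ω, effResField γ A (χ₁ + χ₂ ω) u v ∂ℙ ≤ ∫ ω, g ω ∂ℙ := hInt
        _ = _ := hg_eval
        _ ≤ _ := hbound
    rcases eq_or_lt_of_le hM0 with hM0' | hMpos
    · obtain ⟨E, hE⟩ := hS₁ne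
      have h := key E hE
      rw [← hM0'] at h ⊢
      simpa using h
    · have hdiv : (∫ ω, effResField γ A (χ₁ + χ₂ ω) u v ∂ℙ) / M ≤ sInf S₁ := by
        apply le_csInf hS₁ne
        intro E hE
        rw [div_le_iff₀ hMpos]
        exact key E hE
      rw [hR₁]
      calc ∫ ω, effResField γ A (χ₁ + χ₂ ω) u v ∂ℙ
          = (∫ ω, effResField γ A (χ₁ + χ₂ ω) u v ∂ℙ) / M * M := by
            field_simp
        _ ≤ sInf S₁ * M := mul_le_mul_of_nonneg_right hdiv hM0
  · have hempty : ∀ χ : ℤ × ℤ → ℝ, effResField γ A χ u v = 0 := by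
      intro χ
      unfold effResField
      convert Real.sInf_empty using 2
      ext E
      simp only [Set.mem_setOf_eq, Set.mem_empty_iff_false, iff_false]
      rintro ⟨θ, hθ, -⟩
      exact hθex ⟨θ, hθ⟩
    simp [hempty]
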